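/- Let G be a thin connected finite digraph and x, y vertices with N⁺[x] ⊊ N⁺[y] or N⁻[x] ⊊ N⁻[y]. Then x and y are joined by a walk in the underlying undirected graph of the Cartesian skeleton 𝕊(G). -/

import Mathlib

/-- Closed out-neighborhood `N⁺[v] = {v} ∪ {x : vx ∈ E}`. -/
def Nout {V : Type*} (E : V → V → Prop) (v : V) : Set V := insert v {x | E v x}

/-- Closed in-neighborhood `N⁻[v] = {v} ∪ {x : xv ∈ E}`. -/
def Nin {V : Type*} (E : V → V → Prop) (v : V) : Set V := insert v {x | E x v}

/-- Condition (3) for a family of closed neighborhoods `N`: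
`N[x] ∩ N[y] ⊊ N[x] ∩ N[z]` and `N[x] ∩ N[y] ⊊ N[y] ∩ N[z]`. -/
def NCond3 {V : Type*} (N : V → Set V) (x y z : V) : Prop :=
  N x ∩ N y ⊂ N x ∩ N z ∧ N x ∩ N y ⊂ N y ∩ N z

/-- The N-condition for a family of closed neighborhoods `N`: one of
(1) `N[x] ⊊ N[z] ⊊ N[y]`, (2) `N[y] ⊊ N[z] ⊊ N[x]`, or (3) `NCond3`. -/
def NCond {V : Type*} (N : V → Set V) (x y z : V) : Prop :=
  (N x ⊂ N z ∧ N z ⊂ N y) ∨ (N y ⊂ N z ∧ N z ⊂ N x) ∨ NCond3 N x y z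

/-- The weak N-condition: `N[x] ∩ N[y] ⊆ N[x] ∩ N[z]` and `N[x] ∩ N[y] ⊆ N[y] ∩ N[z]`. -/
def WeakNCond {V : Type*} (N : V → Set V) (x y z : V) : Prop :=
  N x ∩ N y ⊆ N x ∩ N z ∧ N x ∩ N y ⊆ N y ∩ N z

/-- Dispensability condition (D1): some `z` satisfies both the `N⁺`- and the
`N⁻`-condition with `xy`. -/
def D1 {V : Type*} (E : V → V → Prop) (x y : V) : Prop :=
  ∃ z : V, NCond (Nout E) x y z ∧ NCond (Nin E) x y z

/-- Dispensability condition (D2). -/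
def D2 {V : Type*} (E : V → V → Prop) (x y : V) : Prop :=
  ∃ z₁ z₂ : V, (NCond3 (Nout E) x y z₁ ∧ WeakNCond (Nin E) x y z₁) ∧
    (NCond3 (Nin E) x y z₂ ∧ WeakNCond (Nout E) x y z₂)

/-- Dispensability condition (D3). -/
def D3 {V : Type*} (E : V → V → Prop) (x y : V) : Prop :=
  ∃ z : V, NCond (Nout E) x y z ∧ (Nin E x = Nin E z ∨ Nin E y = Nin E z)

/-- Dispensability condition (D4). -/
def D4 {V : Type*} (E : V → V → Prop) (x y : V) : Prop :=
  ∃ z : V, NCond (Nin E) x y z ∧ (Nout E x = Nout E z ∨ Nout E y = Nout E z)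

/-- Dispensability condition (D5). -/
def D5 {V : Type*} (E : V → V → Prop) (x y : V) : Prop :=
  ∃ z₁ z₂ : V, z₁ ≠ z₂ ∧ z₁ ≠ x ∧ z₁ ≠ y ∧ z₂ ≠ x ∧ z₂ ≠ y ∧
    Nout E x = Nout E z₁ ∧ Nin E x = Nin E z₂ ∧ Nin E z₁ = Nin E y ∧ Nout E z₂ = Nout E y

/-- An arc `xy` is dispensable if one of (D1)–(D5) holds. -/
def Dispensable {V : Type*} (E : V → V → Prop) (x y : V) : Prop :=
  D1 E x y ∨ D2 E x y ∨ D3 E x y ∨ D4 E x y ∨ D5 E x y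

/-- Arc relation of the Cartesian skeleton `𝕊(G)`: the non-dispensable arcs of `G`. -/
def SkelAdj {V : Type*} (E : V → V → Prop) (x y : V) : Prop :=
  E x y ∧ ¬ Dispensable E x y

/-- A digraph is thin if distinct vertices have distinct closed out-neighborhoods or
distinct closed in-neighborhoods. -/
def Thin {V : Type*} (E : V → V → Prop) : Prop :=
  ∀ x y : V, Nout E x = Nout E y → Nin E x = Nin E y → x = y

set_option linter.unusedVariables false
set_option linter.unusedSectionVars false
namespace SkelAux

variable {V : Type*} [Fintype V]

lemma nle {s t : Set V} (h : s ⊆ t) : s.ncard ≤ t.ncard := Set.ncard_le_ncard h (Set.toFinite _)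
lemma nlt {s t : Set V} (h : s ⊂ t) : s.ncard < t.ncard := Set.ncard_lt_ncard h (Set.toFinite _)
lemma ncardV (s : Set V) : s.ncard ≤ Fintype.card V := by
  simpa [Set.ncard_univ, Nat.card_eq_fintype_card] using
    Set.ncard_le_ncard (Set.subset_univ s) (Set.toFinite _)

lemma diff_chain {s t u : Set V} (h1 : s ⊆ t) (h2 : t ⊂ u) : t \ s ⊂ u \ s := by
  constructor
  · exact Set.diff_subset_diff_left h2.subset
  · intro hsub
    obtain ⟨w, hwu, hwt⟩ := Set.exists_of_ssubset h2
    exact hwt (hsub ⟨hwu, fun hws => hwt (h1 hws)⟩).1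

lemma one_le_diffs {s t : Set V} (h : s ≠ t) : 1 ≤ (s \ t).ncard + (t \ s).ncard := by
  by_contra h'
  push_neg at h'
  have h1 : s \ t = ∅ := (Set.ncard_eq_zero (Set.toFinite _)).mp (by omega)
  have h2 : t \ s = ∅ := (Set.ncard_eq_zero (Set.toFinite _)).mp (by omega)
  exact h (Set.Subset.antisymm (Set.diff_eq_empty.mp h1) (Set.diff_eq_empty.mp h2))

lemma one_le_diff {s t : Set V} (h : s ⊂ t) : 1 ≤ (t \ s).ncard := by
  obtain ⟨w, hwt, hws⟩ := Set.exists_of_ssubset h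
  exact (Set.ncard_pos (Set.toFinite _)).mpr ⟨w, hwt, hws⟩

noncomputable def MM (E : V → V → Prop) (x y : V) : ℕ :=
  (Nout E x ∩ Nout E y).ncard + (Nin E x ∩ Nin E y).ncard
noncomputable def DD (E : V → V → Prop) (x y : V) : ℕ :=
  ((Nout E x \ Nout E y).ncard + (Nout E y \ Nout E x).ncard) +
  ((Nin E x \ Nin E y).ncard + (Nin E y \ Nin E x).ncard)
noncomputable def mu (E : V → V → Prop) (x y : V) : ℕ :=
  (2 * Fintype.card V - MM E x y) * (4 * Fintype.card V + 1) + DD E x y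

lemma MM_le (E : V → V → Prop) (x y : V) : MM E x y ≤ 2 * Fintype.card V := by
  have h1 := ncardV (Nout E x ∩ Nout E y)
  have h2 := ncardV (Nin E x ∩ Nin E y)
  unfold MM; omega

lemma DD_lt (E : V → V → Prop) (x y : V) : DD E x y < 4 * Fintype.card V + 1 := by
  have h1 := ncardV (Nout E x \ Nout E y)
  have h2 := ncardV (Nout E y \ Nout E x)
  have h3 := ncardV (Nin E x \ Nin E y)
  have h4 := ncardV (Nin E y \ Nin E x)
  unfold DD; omega

lemma mu_lt_of {E : V → V → Prop} {x y a b : V}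
    (h1 : MM E x y ≤ MM E a b)
    (h2 : MM E x y < MM E a b ∨ DD E a b < DD E x y) :
    mu E a b < mu E x y := by
  have hK : MM E a b ≤ 2 * Fintype.card V := MM_le E a b
  have hD : DD E a b < 4 * Fintype.card V + 1 := DD_lt E a b
  unfold mu
  rcases h2 with h2 | h2
  · have hm : 2 * Fintype.card V - MM E a b + 1 ≤ 2 * Fintype.card V - MM E x y := by omega
    calc (2 * Fintype.card V - MM E a b) * (4 * Fintype.card V + 1) + DD E a b
        < (2 * Fintype.card V - MM E a b) * (4 * Fintype.card V + 1)
            + (4 * Fintype.card V + 1) := by omega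
      _ = (2 * Fintype.card V - MM E a b + 1) * (4 * Fintype.card V + 1) := by ring
      _ ≤ (2 * Fintype.card V - MM E x y) * (4 * Fintype.card V + 1) :=
            Nat.mul_le_mul_right _ hm
      _ ≤ (2 * Fintype.card V - MM E x y) * (4 * Fintype.card V + 1) + DD E x y :=
            Nat.le_add_right _ _
  · have := Nat.mul_le_mul_right (4 * Fintype.card V + 1)
      (Nat.sub_le_sub_left h1 (2 * Fintype.card V))
    omega

lemma mu_comm (E : V → V → Prop) (x y : V) : mu E y x = mu E x y := by
  unfold mu MM DD
  rw [Set.inter_comm (Nout E y), Set.inter_comm (Nin E y)]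
  omega

lemma MM_flip (E : V → V → Prop) (x y : V) : MM (fun a b => E b a) x y = MM E x y := by
  show (Nin E x ∩ Nin E y).ncard + (Nout E x ∩ Nout E y).ncard = _
  unfold MM; omega

lemma DD_flip (E : V → V → Prop) (x y : V) : DD (fun a b => E b a) x y = DD E x y := by
  show ((Nin E x \ Nin E y).ncard + (Nin E y \ Nin E x).ncard) +
    ((Nout E x \ Nout E y).ncard + (Nout E y \ Nout E x).ncard) = _
  unfold DD; omega

lemma mu_flip (E : V → V → Prop) (x y : V) : mu (fun a b => E b a) x y = mu E x y := by
  unfold mu; rw [MM_flip, DD_flip]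

end SkelAux

namespace SkelAux
variable {V : Type*} [Fintype V]

lemma mem_Nout_self (E : V → V → Prop) (v : V) : v ∈ Nout E v := Set.mem_insert _ _
lemma mem_Nin_self (E : V → V → Prop) (v : V) : v ∈ Nin E v := Set.mem_insert _ _

lemma arc_of_out {E : V → V → Prop} {x y : V} (hne : x ≠ y) (h : Nout E x ⊆ Nout E y) :
    E y x := by
  have hx : x ∈ Nout E y := h (mem_Nout_self E x)
  rcases Set.mem_insert_iff.mp hx with h' | h'
  · exact absurd h' hne
  · exact h'

lemma ncond3_not {N : V → Set V} {x y z : V} (h : N x ⊆ N y) : ¬ NCond3 N x y z := by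
  rintro ⟨h1, h2⟩
  rw [Set.inter_eq_left.mpr h] at h1
  exact h1.not_subset Set.inter_subset_left

lemma ncond_chain {N : V → Set V} {x y z : V} (h : N x ⊆ N y) (hc : NCond N x y z) :
    N x ⊂ N z ∧ N z ⊂ N y := by
  rcases hc with h1 | h2 | h3
  · exact h1
  · exact absurd h ((h2.1.trans h2.2).not_subset)
  · exact absurd h3 (ncond3_not h)

lemma ncond_ne {N : V → Set V} {x y z : V} (hc : NCond N x y z) : z ≠ x ∧ z ≠ y := by
  constructor <;> rintro rfl
  · rcases hc with h | h | ⟨h1, h2⟩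
    · exact (ssubset_irrefl _) h.1
    · exact (ssubset_irrefl _) h.2
    · rw [Set.inter_comm (N y)] at h2; exact (ssubset_irrefl _) h2
  · rcases hc with h | h | ⟨h1, h2⟩
    · exact (ssubset_irrefl _) h.2
    · exact (ssubset_irrefl _) h.1
    · exact (ssubset_irrefl _) h1

lemma ncond3_comm {N : V → Set V} {x y z : V} : NCond3 N x y z ↔ NCond3 N y x z := by
  unfold NCond3; rw [Set.inter_comm (N y) (N x)]; exact and_comm

lemma weak_comm {N : V → Set V} {x y z : V} : WeakNCond N x y z ↔ WeakNCond N y x z := by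
  unfold WeakNCond; rw [Set.inter_comm (N y) (N x)]; exact and_comm

lemma ncond_comm {N : V → Set V} {x y z : V} : NCond N x y z ↔ NCond N y x z := by
  unfold NCond
  constructor <;> rintro (h | h | h)
  · exact Or.inr (Or.inl h)
  · exact Or.inl h
  · exact Or.inr (Or.inr (ncond3_comm.mp h))
  · exact Or.inr (Or.inl h)
  · exact Or.inl h
  · exact Or.inr (Or.inr (ncond3_comm.mp h))

lemma disp_comm {E : V → V → Prop} {x y : V} :
    Dispensable E x y ↔ Dispensable E y x := by
  have base : ∀ (E : V → V → Prop) (x y : V), Dispensable E x y → Dispensable E y x := by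
    rintro E x y (⟨z, h1, h2⟩ | ⟨z₁, z₂, h1, h2⟩ | ⟨z, h1, h2⟩ | ⟨z, h1, h2⟩ |
      ⟨z₁, z₂, hz, h1x, h1y, h2x, h2y, e1, e2, e3, e4⟩)
    · exact Or.inl ⟨z, ncond_comm.mp h1, ncond_comm.mp h2⟩
    · exact Or.inr (Or.inl ⟨z₁, z₂, ⟨ncond3_comm.mp h1.1, weak_comm.mp h1.2⟩,
        ⟨ncond3_comm.mp h2.1, weak_comm.mp h2.2⟩⟩)
    · exact Or.inr (Or.inr (Or.inl ⟨z, ncond_comm.mp h1, h2.symm⟩))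
    · exact Or.inr (Or.inr (Or.inr (Or.inl ⟨z, ncond_comm.mp h1, h2.symm⟩)))
    · exact Or.inr (Or.inr (Or.inr (Or.inr ⟨z₂, z₁, hz.symm, h2y, h2x, h1y, h1x,
        e4.symm, e3.symm, e2.symm, e1.symm⟩)))
  exact ⟨base E x y, base E y x⟩

lemma disp_flip {E : V → V → Prop} {x y : V} :
    Dispensable (fun a b => E b a) x y ↔ Dispensable E x y := by
  have base : ∀ (E : V → V → Prop) (x y : V), Dispensable E x y →
      Dispensable (fun a b => E b a) x y := by
    rintro E x y (⟨z, h1, h2⟩ | ⟨z₁, z₂, h1, h2⟩ | ⟨z, h1, h2⟩ | ⟨z, h1, h2⟩ |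
      ⟨z₁, z₂, hz, h1x, h1y, h2x, h2y, e1, e2, e3, e4⟩)
    · exact Or.inl ⟨z, h2, h1⟩
    · exact Or.inr (Or.inl ⟨z₂, z₁, h2, h1⟩)
    · exact Or.inr (Or.inr (Or.inr (Or.inl ⟨z, h1, h2⟩)))
    · exact Or.inr (Or.inr (Or.inl ⟨z, h1, h2⟩))
    · exact Or.inr (Or.inr (Or.inr (Or.inr ⟨z₂, z₁, hz.symm, h2x, h2y, h1x, h1y,
        e2, e1, e4, e3⟩)))
  constructor
  · intro h; exact base _ x y h
  · exact base E x y

lemma skel_flip {E : V → V → Prop} {a b : V} :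
    SkelAdj (fun p q => E q p) a b ↔ SkelAdj E b a := by
  unfold SkelAdj
  constructor
  · rintro ⟨he, hd⟩
    exact ⟨he, fun d => hd (disp_flip.mpr (disp_comm.mp d))⟩
  · rintro ⟨he, hd⟩
    exact ⟨he, fun d => hd (disp_comm.mp (disp_flip.mp d))⟩

lemma rtg_flip {E : V → V → Prop} {a b : V}
    (h : Relation.ReflTransGen
      (fun p q => SkelAdj (fun u v => E v u) p q ∨ SkelAdj (fun u v => E v u) q p) a b) :
    Relation.ReflTransGen (fun p q => SkelAdj E p q ∨ SkelAdj E q p) a b := by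
  refine Relation.ReflTransGen.mono ?_ a b h
  rintro p q (h | h)
  · exact Or.inr (skel_flip.mp h)
  · exact Or.inl (skel_flip.mp h)

lemma rtg_symm {E : V → V → Prop} {a b : V}
    (h : Relation.ReflTransGen (fun p q => SkelAdj E p q ∨ SkelAdj E q p) a b) :
    Relation.ReflTransGen (fun p q => SkelAdj E p q ∨ SkelAdj E q p) b a :=
  by
    haveI : Std.Symm (fun p q => SkelAdj E p q ∨ SkelAdj E q p) := ⟨fun _ _ hpq => hpq.symm⟩
    exact Std.Symm.symm _ _ h

end SkelAux

namespace SkelAux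
variable {V : Type*} [Fintype V]

lemma dz0 {s t : Set V} (h : s ⊆ t) : (s \ t).ncard = 0 := by
  rw [Set.diff_eq_empty.mpr h]; exact Set.ncard_empty _

lemma MM_le_of {E : V → V → Prop} {x y a b : V}
    (h1 : Nout E x ∩ Nout E y ⊆ Nout E a ∩ Nout E b)
    (h2 : Nin E x ∩ Nin E y ⊆ Nin E a ∩ Nin E b) : MM E x y ≤ MM E a b := by
  have t1 := nle h1; have t2 := nle h2; unfold MM; omega

lemma MM_lt_left {E : V → V → Prop} {x y a b : V}
    (h1 : Nout E x ∩ Nout E y ⊂ Nout E a ∩ Nout E b)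
    (h2 : Nin E x ∩ Nin E y ⊆ Nin E a ∩ Nin E b) : MM E x y < MM E a b := by
  have t1 := nlt h1; have t2 := nle h2; unfold MM; omega

lemma MM_lt_right {E : V → V → Prop} {x y a b : V}
    (h1 : Nout E x ∩ Nout E y ⊆ Nout E a ∩ Nout E b)
    (h2 : Nin E x ∩ Nin E y ⊂ Nin E a ∩ Nin E b) : MM E x y < MM E a b := by
  have t1 := nle h1; have t2 := nlt h2; unfold MM; omega

lemma core : ∀ (n : ℕ) (E : V → V → Prop), Irreflexive E → Thin E →
    ∀ x y : V, x ≠ y → Nout E x ⊆ Nout E y → mu E x y < n →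
    Relation.ReflTransGen (fun a b => SkelAdj E a b ∨ SkelAdj E b a) x y := by
  intro n
  induction n with
  | zero => intro E _ _ x y _ _ h; omega
  | succ n IH =>
    intro E hirr hthin x y hne hsub hmu
    have hthin' : Thin (fun p q : V => E q p) := fun p q h1 h2 => hthin p q h2 h1
    have hirr' : Irreflexive (fun p q : V => E q p) := fun v hv => hirr v hv
    have step : ∀ a b : V, a ≠ b →
        (Nout E a ⊆ Nout E b ∨ Nout E b ⊆ Nout E a ∨ Nin E a ⊆ Nin E b ∨ Nin E b ⊆ Nin E a) →
        mu E a b < mu E x y →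
        Relation.ReflTransGen (fun p q => SkelAdj E p q ∨ SkelAdj E q p) a b := by
      intro a b hab hcase hlt
      have hlt' : mu E a b < n := by omega
      rcases hcase with h | h | h | h
      · exact IH E hirr hthin a b hab h hlt'
      · exact rtg_symm (IH E hirr hthin b a hab.symm h (by rwa [mu_comm]))
      · exact rtg_flip (IH _ hirr' hthin' a b hab h (by rwa [mu_flip]))
      · exact rtg_flip (rtg_symm (IH _ hirr' hthin' b a hab.symm h
          (by rw [mu_flip, mu_comm]; exact hlt')))
    have hExy : E y x := arc_of_out hne hsub
    by_cases hd : Dispensable E y x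
    swap
    · exact Relation.ReflTransGen.single (Or.inr ⟨hExy, hd⟩)
    have hdxy : Dispensable E x y := disp_comm.mp hd
    have eAxy : Nout E x ∩ Nout E y = Nout E x := Set.inter_eq_left.mpr hsub
    have a1y0 : (Nout E x \ Nout E y).ncard = 0 := dz0 hsub
    rcases hdxy with ⟨z, hp, hm⟩ | ⟨z₁, z₂, h1, h2⟩ | ⟨z, hp, hm⟩ | ⟨z, hm, hp⟩ |
      ⟨z₁, z₂, hz, h1x, h1y, h2x, h2y, e1, e2, e3, e4⟩
    · -- D1
      obtain ⟨hz1, hz2⟩ := ncond_chain hsub hp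
      have hzx : x ≠ z := fun h => hz1.ne (congrArg (Nout E) h)
      have hzy : z ≠ y := fun h => hz2.ne (congrArg (Nout E) h)
      have sxz : Nout E x ⊆ Nout E z := hz1.subset
      have szy : Nout E z ⊆ Nout E y := hz2.subset
      have PxzS : Nout E x ∩ Nout E y ⊆ Nout E x ∩ Nout E z := by
        rw [eAxy]; exact Set.subset_inter Set.Subset.rfl sxz
      have PzyS : Nout E x ∩ Nout E y ⊆ Nout E z ∩ Nout E y :=
        Set.inter_subset_inter sxz Set.Subset.rfl
      have PzyLT : Nout E x ∩ Nout E y ⊂ Nout E z ∩ Nout E y := by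
        rw [eAxy, Set.inter_eq_left.mpr szy]; exact hz1
      have a2lt : (Nout E z \ Nout E x).ncard < (Nout E y \ Nout E x).ncard :=
        nlt (diff_chain sxz hz2)
      have axz0 : (Nout E x \ Nout E z).ncard = 0 := dz0 sxz
      rcases hm with ⟨g1, g2⟩ | ⟨g1, g2⟩ | ⟨g1, g2⟩
      · -- (1⁻)
        have hxz := step x z hzx (Or.inl sxz) (mu_lt_of
          (MM_le_of PxzS (Set.subset_inter Set.inter_subset_left
            (Set.inter_subset_left.trans g1.subset)))
          (Or.inr (by
            have b10 : (Nin E x \ Nin E z).ncard = 0 := dz0 g1.subset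
            have b1y0 : (Nin E x \ Nin E y).ncard = 0 := dz0 (g1.subset.trans g2.subset)
            have b2le : (Nin E z \ Nin E x).ncard ≤ (Nin E y \ Nin E x).ncard :=
              nle (diff_chain g1.subset g2).subset
            unfold DD; omega)))
        have hzy' := step z y hzy (Or.inl szy) (mu_lt_of
          (MM_le_of PzyS (Set.inter_subset_inter g1.subset Set.Subset.rfl))
          (Or.inl (MM_lt_left PzyLT (Set.inter_subset_inter g1.subset Set.Subset.rfl))))
        exact hxz.trans hzy'
      · -- (2⁻)
        have hQxz : Nin E x ∩ Nin E y ⊂ Nin E x ∩ Nin E z := by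
          rw [Set.inter_eq_right.mpr (g1.subset.trans g2.subset),
            Set.inter_eq_right.mpr g2.subset]
          exact g1
        have hQzy : Nin E x ∩ Nin E y ⊆ Nin E z ∩ Nin E y := by
          rw [Set.inter_eq_right.mpr (g1.subset.trans g2.subset)]
          exact Set.subset_inter g1.subset Set.Subset.rfl
        have hxz := step x z hzx (Or.inl sxz)
          (mu_lt_of (MM_le_of PxzS hQxz.subset) (Or.inl (MM_lt_right PxzS hQxz)))
        have hzy' := step z y hzy (Or.inl szy)
          (mu_lt_of (MM_le_of PzyS hQzy) (Or.inl (MM_lt_left PzyLT hQzy)))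
        exact hxz.trans hzy'
      · -- (3⁻)
        have hQzy : Nin E x ∩ Nin E y ⊆ Nin E z ∩ Nin E y := by
          rw [Set.inter_comm (Nin E z) (Nin E y)]; exact g2.subset
        have hxz := step x z hzx (Or.inl sxz)
          (mu_lt_of (MM_le_of PxzS g1.subset) (Or.inl (MM_lt_right PxzS g1)))
        have hzy' := step z y hzy (Or.inl szy)
          (mu_lt_of (MM_le_of PzyS hQzy) (Or.inl (MM_lt_left PzyLT hQzy)))
        exact hxz.trans hzy'
    · -- D2 impossible
      exact absurd h1.1 (ncond3_not hsub)
    · -- D3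
      obtain ⟨hz1, hz2⟩ := ncond_chain hsub hp
      have hzx : x ≠ z := fun h => hz1.ne (congrArg (Nout E) h)
      have hzy : z ≠ y := fun h => hz2.ne (congrArg (Nout E) h)
      have sxz : Nout E x ⊆ Nout E z := hz1.subset
      have szy : Nout E z ⊆ Nout E y := hz2.subset
      have PxzS : Nout E x ∩ Nout E y ⊆ Nout E x ∩ Nout E z := by
        rw [eAxy]; exact Set.subset_inter Set.Subset.rfl sxz
      have PzyS : Nout E x ∩ Nout E y ⊆ Nout E z ∩ Nout E y :=
        Set.inter_subset_inter sxz Set.Subset.rfl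
      have PzyLT : Nout E x ∩ Nout E y ⊂ Nout E z ∩ Nout E y := by
        rw [eAxy, Set.inter_eq_left.mpr szy]; exact hz1
      have a2lt : (Nout E z \ Nout E x).ncard < (Nout E y \ Nout E x).ncard :=
        nlt (diff_chain sxz hz2)
      have axz0 : (Nout E x \ Nout E z).ncard = 0 := dz0 sxz
      rcases hm with hm2 | hm2
      · -- Nin x = Nin z
        have hxz := step x z hzx (Or.inl sxz) (mu_lt_of
          (MM_le_of PxzS (by rw [← hm2, Set.inter_self]; exact Set.inter_subset_left))
          (Or.inr (by
            have b10 : (Nin E x \ Nin E z).ncard = 0 := by rw [← hm2]; simp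
            have b20 : (Nin E z \ Nin E x).ncard = 0 := by rw [← hm2]; simp
            unfold DD; omega)))
        have hzy' := step z y hzy (Or.inl szy) (mu_lt_of
          (MM_le_of PzyS (by rw [← hm2]))
          (Or.inl (MM_lt_left PzyLT (by rw [← hm2]))))
        exact hxz.trans hzy'
      · -- Nin y = Nin z
        have hxz := step x z hzx (Or.inl sxz) (mu_lt_of
          (MM_le_of PxzS (by rw [← hm2]))
          (Or.inr (by
            have b1e : (Nin E x \ Nin E z).ncard = (Nin E x \ Nin E y).ncard := by
              rw [← hm2]
            have b2e : (Nin E z \ Nin E x).ncard = (Nin E y \ Nin E x).ncard := by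
              rw [← hm2]
            unfold DD; omega)))
        have hQzy : Nin E x ∩ Nin E y ⊆ Nin E z ∩ Nin E y := by
          rw [← hm2, Set.inter_self]; exact Set.inter_subset_right
        have hzy' := step z y hzy (Or.inl szy) (mu_lt_of
          (MM_le_of PzyS hQzy) (Or.inl (MM_lt_left PzyLT hQzy)))
        exact hxz.trans hzy'
    · -- D4
      obtain ⟨hzx, hzy⟩ := ncond_ne hm
      rcases hp with hp | hp
      · -- Nout x = Nout z
        have PxzS : Nout E x ∩ Nout E y ⊆ Nout E x ∩ Nout E z := by
          rw [← hp, Set.inter_self, eAxy]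
        have PzyS : Nout E x ∩ Nout E y ⊆ Nout E z ∩ Nout E y := by rw [← hp]
        have sAxz : Nout E x ⊆ Nout E z := by rw [← hp]
        have sAzy : Nout E z ⊆ Nout E y := by rw [← hp]; exact hsub
        have axz0 : (Nout E x \ Nout E z).ncard = 0 := by rw [← hp]; simp
        have azx0 : (Nout E z \ Nout E x).ncard = 0 := by rw [← hp]; simp
        rcases hm with ⟨g1, g2⟩ | ⟨g1, g2⟩ | ⟨g1, g2⟩
        · -- (1⁻)
          have hxz := step x z hzx.symm (Or.inr (Or.inr (Or.inl g1.subset))) (mu_lt_of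
            (MM_le_of PxzS (Set.subset_inter Set.inter_subset_left
              (Set.inter_subset_left.trans g1.subset)))
            (Or.inr (by
              have b10 : (Nin E x \ Nin E z).ncard = 0 := dz0 g1.subset
              have b1y0 : (Nin E x \ Nin E y).ncard = 0 := dz0 (g1.subset.trans g2.subset)
              have b2lt : (Nin E z \ Nin E x).ncard < (Nin E y \ Nin E x).ncard :=
                nlt (diff_chain g1.subset g2)
              unfold DD; omega)))
          have hQzy : Nin E x ∩ Nin E y ⊂ Nin E z ∩ Nin E y := by
            rw [Set.inter_eq_left.mpr (g1.subset.trans g2.subset),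
              Set.inter_eq_left.mpr g2.subset]
            exact g1
          have hzy' := step z y hzy (Or.inr (Or.inr (Or.inl g2.subset)))
            (mu_lt_of (MM_le_of PzyS hQzy.subset) (Or.inl (MM_lt_right PzyS hQzy)))
          exact hxz.trans hzy'
        · -- (2⁻)
          have hQxz : Nin E x ∩ Nin E y ⊂ Nin E x ∩ Nin E z := by
            rw [Set.inter_eq_right.mpr (g1.subset.trans g2.subset),
              Set.inter_eq_right.mpr g2.subset]
            exact g1
          have hxz := step x z hzx.symm (Or.inr (Or.inr (Or.inr g2.subset)))
            (mu_lt_of (MM_le_of PxzS hQxz.subset) (Or.inl (MM_lt_right PxzS hQxz)))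
          have hQzy : Nin E x ∩ Nin E y ⊆ Nin E z ∩ Nin E y := by
            rw [Set.inter_eq_right.mpr (g1.subset.trans g2.subset)]
            exact Set.subset_inter g1.subset Set.Subset.rfl
          have hzy' := step z y hzy (Or.inr (Or.inr (Or.inr g1.subset))) (mu_lt_of
            (MM_le_of PzyS hQzy)
            (Or.inr (by
              have a1e : (Nout E z \ Nout E y).ncard = (Nout E x \ Nout E y).ncard := by
                rw [← hp]
              have a2e : (Nout E y \ Nout E z).ncard = (Nout E y \ Nout E x).ncard := by
                rw [← hp]
              have b1lt : (Nin E z \ Nin E y).ncard < (Nin E x \ Nin E y).ncard :=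
                nlt (diff_chain g1.subset g2)
              have b20 : (Nin E y \ Nin E z).ncard = 0 := dz0 g1.subset
              unfold DD; omega)))
          exact hxz.trans hzy'
        · -- (3⁻)
          have hxz := step x z hzx.symm (Or.inl sAxz)
            (mu_lt_of (MM_le_of PxzS g1.subset) (Or.inl (MM_lt_right PxzS g1)))
          have hQzy : Nin E x ∩ Nin E y ⊂ Nin E z ∩ Nin E y := by
            rw [Set.inter_comm (Nin E z) (Nin E y)]; exact g2
          have hzy' := step z y hzy (Or.inl sAzy)
            (mu_lt_of (MM_le_of PzyS hQzy.subset) (Or.inl (MM_lt_right PzyS hQzy)))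
          exact hxz.trans hzy'
      · -- Nout y = Nout z
        have PxzS : Nout E x ∩ Nout E y ⊆ Nout E x ∩ Nout E z := by rw [← hp]
        have PzyS : Nout E x ∩ Nout E y ⊆ Nout E z ∩ Nout E y := by
          rw [← hp]; exact Set.inter_subset_inter hsub Set.Subset.rfl
        have sAxz : Nout E x ⊆ Nout E z := by rw [← hp]; exact hsub
        have sAzy : Nout E z ⊆ Nout E y := by rw [← hp]
        rcases hm with ⟨g1, g2⟩ | ⟨g1, g2⟩ | ⟨g1, g2⟩
        · -- (1⁻)
          have hxz := step x z hzx.symm (Or.inr (Or.inr (Or.inl g1.subset))) (mu_lt_of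
            (MM_le_of PxzS (Set.subset_inter Set.inter_subset_left
              (Set.inter_subset_left.trans g1.subset)))
            (Or.inr (by
              have a1e : (Nout E x \ Nout E z).ncard = (Nout E x \ Nout E y).ncard := by
                rw [← hp]
              have a2e : (Nout E z \ Nout E x).ncard = (Nout E y \ Nout E x).ncard := by
                rw [← hp]
              have b10 : (Nin E x \ Nin E z).ncard = 0 := dz0 g1.subset
              have b1y0 : (Nin E x \ Nin E y).ncard = 0 := dz0 (g1.subset.trans g2.subset)
              have b2lt : (Nin E z \ Nin E x).ncard < (Nin E y \ Nin E x).ncard :=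
                nlt (diff_chain g1.subset g2)
              unfold DD; omega)))
          have hQzy : Nin E x ∩ Nin E y ⊂ Nin E z ∩ Nin E y := by
            rw [Set.inter_eq_left.mpr (g1.subset.trans g2.subset),
              Set.inter_eq_left.mpr g2.subset]
            exact g1
          have hzy' := step z y hzy (Or.inr (Or.inr (Or.inl g2.subset)))
            (mu_lt_of (MM_le_of PzyS hQzy.subset) (Or.inl (MM_lt_right PzyS hQzy)))
          exact hxz.trans hzy'
        · -- (2⁻)
          have hQxz : Nin E x ∩ Nin E y ⊂ Nin E x ∩ Nin E z := by
            rw [Set.inter_eq_right.mpr (g1.subset.trans g2.subset),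
              Set.inter_eq_right.mpr g2.subset]
            exact g1
          have hxz := step x z hzx.symm (Or.inr (Or.inr (Or.inr g2.subset)))
            (mu_lt_of (MM_le_of PxzS hQxz.subset) (Or.inl (MM_lt_right PxzS hQxz)))
          have hQzy : Nin E x ∩ Nin E y ⊆ Nin E z ∩ Nin E y := by
            rw [Set.inter_eq_right.mpr (g1.subset.trans g2.subset)]
            exact Set.subset_inter g1.subset Set.Subset.rfl
          have hzy' := step z y hzy (Or.inr (Or.inr (Or.inr g1.subset))) (mu_lt_of
            (MM_le_of PzyS hQzy)
            (Or.inr (by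
              have a10 : (Nout E z \ Nout E y).ncard = 0 := by rw [← hp]; simp
              have a20 : (Nout E y \ Nout E z).ncard = 0 := by rw [← hp]; simp
              have b1lt : (Nin E z \ Nin E y).ncard < (Nin E x \ Nin E y).ncard :=
                nlt (diff_chain g1.subset g2)
              have b20 : (Nin E y \ Nin E z).ncard = 0 := dz0 g1.subset
              unfold DD; omega)))
          exact hxz.trans hzy'
        · -- (3⁻)
          have hxz := step x z hzx.symm (Or.inl sAxz)
            (mu_lt_of (MM_le_of PxzS g1.subset) (Or.inl (MM_lt_right PxzS g1)))
          have hQzy : Nin E x ∩ Nin E y ⊂ Nin E z ∩ Nin E y := by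
            rw [Set.inter_comm (Nin E z) (Nin E y)]; exact g2
          have hzy' := step z y hzy (Or.inl sAzy)
            (mu_lt_of (MM_le_of PzyS hQzy.subset) (Or.inl (MM_lt_right PzyS hQzy)))
          exact hxz.trans hzy'
    · -- D5
      have hAne : Nout E x ≠ Nout E y := fun h => h1y (hthin z₁ y (by rw [← e1, h]) e3)
      have hBne : Nin E x ≠ Nin E y := fun h => h2y (hthin z₂ y e4 (by rw [← e2, h]))
      have hay1 : 1 ≤ (Nout E y \ Nout E x).ncard :=
        one_le_diff (hsub.ssubset_of_ne hAne)
      have hb1 : 1 ≤ (Nin E x \ Nin E y).ncard + (Nin E y \ Nin E x).ncard :=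
        one_le_diffs hBne
      have hxz := step x z₁ (Ne.symm h1x) (Or.inl (by rw [← e1])) (mu_lt_of
        (MM_le_of (by rw [← e1, Set.inter_self, eAxy]) (by rw [e3]))
        (Or.inr (by
          have a10 : (Nout E x \ Nout E z₁).ncard = 0 := by rw [← e1]; simp
          have a20 : (Nout E z₁ \ Nout E x).ncard = 0 := by rw [← e1]; simp
          have b1e : (Nin E x \ Nin E z₁).ncard = (Nin E x \ Nin E y).ncard := by rw [e3]
          have b2e : (Nin E z₁ \ Nin E x).ncard = (Nin E y \ Nin E x).ncard := by rw [e3]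
          unfold DD; omega)))
      have hzy' := step z₁ y h1y (Or.inr (Or.inr (Or.inl (by rw [e3])))) (mu_lt_of
        (MM_le_of (by rw [← e1])
          (by rw [e3, Set.inter_self]; exact Set.inter_subset_right))
        (Or.inr (by
          have a10 : (Nout E z₁ \ Nout E y).ncard = 0 := by rw [← e1]; exact a1y0
          have a2e : (Nout E y \ Nout E z₁).ncard = (Nout E y \ Nout E x).ncard := by
            rw [← e1]
          have b10 : (Nin E z₁ \ Nin E y).ncard = 0 := by rw [e3]; simp
          have b20 : (Nin E y \ Nin E z₁).ncard = 0 := by rw [e3]; simp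
          unfold DD; omega)))
      exact hxz.trans hzy'

end SkelAux

/-- In a thin connected finite digraph, if `N⁺[x] ⊊ N⁺[y]` or `N⁻[x] ⊊ N⁻[y]`, then `x`
and `y` are joined by a walk in the underlying undirected graph of the Cartesian
skeleton `𝕊(G)`. -/
theorem skeleton_walk_of_nbhd_ssubset {V : Type*} [Fintype V]
    (E : V → V → Prop) (hirr : Irreflexive E) (hthin : Thin E)
    (hconn : ∀ x y : V, Relation.ReflTransGen (fun a b => E a b ∨ E b a) x y)
    (x y : V) (h : Nout E x ⊂ Nout E y ∨ Nin E x ⊂ Nin E y) :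
    Relation.ReflTransGen (fun a b => SkelAdj E a b ∨ SkelAdj E b a) x y := by
  have hne : x ≠ y := by
    rcases h with h | h <;> rintro rfl <;> exact (ssubset_irrefl _) h
  have hthin' : Thin (fun p q : V => E q p) := fun p q h1 h2 => hthin p q h2 h1
  have hirr' : Irreflexive (fun p q : V => E q p) := fun v hv => hirr v hv
  rcases h with h | h
  · exact SkelAux.core (SkelAux.mu E x y + 1) E hirr hthin x y hne h.subset
      (Nat.lt_succ_self _)
  · exact SkelAux.rtg_flip (SkelAux.core (SkelAux.mu (fun p q => E q p) x y + 1) _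
      hirr' hthin' x y hne h.subset (Nat.lt_succ_self _))
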